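/- If φ(x) = x + higher order terms is a polynomial and for some m ≥ 1 the identity Σ_{k=0}^m (-1)^k C(m,k) φ^{∘k}(x) = 0 holds, then the compositional inverse φ^{-1}(x) is also a polynomial. -/

import Mathlib

open PowerSeries

/-- Composition `f ∘ g` of formal power series in one variable (intended for `g` with zero
constant term): the coefficient of `X^d` only involves `(coeff k f)` for `k ≤ d`. -/
noncomputable def PowerSeries.compose {F : Type*} [CommRing F] (f g : PowerSeries F) :
    PowerSeries F :=
  PowerSeries.mk fun d => ∑ k ∈ Finset.range (d + 1), coeff k f * coeff d (g ^ k)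

/-- `k`-fold compositional iterate `φ^{∘k}`, with `φ^{∘0} = id = X`. -/
noncomputable def PowerSeries.iterComp {F : Type*} [CommRing F] (φ : PowerSeries F) :
    ℕ → PowerSeries F
  | 0 => PowerSeries.X
  | k + 1 => PowerSeries.compose (PowerSeries.iterComp φ k) φ

/-- `Φ_m = ∑_{k=0}^m (-1)^k C(m,k) φ^{∘k}`. -/
noncomputable def PowerSeries.Phi {F : Type*} [CommRing F] (φ : PowerSeries F) (m : ℕ) :
    PowerSeries F :=
  ∑ k ∈ Finset.range (m + 1), ((-1 : F) ^ k * (m.choose k : F)) • PowerSeries.iterComp φ k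

section Aux

variable {F : Type*} [CommRing F]

lemma my_coeff_compose (f g : PowerSeries F) (d : ℕ) :
    coeff d (PowerSeries.compose f g)
      = ∑ k ∈ Finset.range (d + 1), coeff k f * coeff d (g ^ k) := by
  simp [PowerSeries.compose]

lemma my_compose_sum_smul {ι : Type*} (s : Finset ι) (c : ι → F) (a : ι → PowerSeries F)
    (g : PowerSeries F) :
    PowerSeries.compose (∑ i ∈ s, c i • a i) g
      = ∑ i ∈ s, c i • PowerSeries.compose (a i) g := by
  ext d
  simp only [my_coeff_compose, map_sum, map_smul, smul_eq_mul, Finset.sum_mul, Finset.mul_sum]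
  rw [Finset.sum_comm]
  apply Finset.sum_congr rfl
  intros
  apply Finset.sum_congr rfl
  intros
  ring

lemma my_compose_sub (f g h : PowerSeries F) :
    PowerSeries.compose (f - g) h
      = PowerSeries.compose f h - PowerSeries.compose g h := by
  ext d
  simp [my_coeff_compose, Finset.sum_sub_distrib, sub_mul]

lemma my_pow_coeff_eq_zero {g : PowerSeries F} {N : ℕ} (hg : ∀ d > N, coeff d g = 0)
    (k : ℕ) : ∀ d > k * N, coeff d (g ^ k) = 0 := by
  induction k with
  | zero =>
    intro d hd
    simp only [Nat.zero_mul] at hd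
    rw [pow_zero, PowerSeries.coeff_one, if_neg (by omega : ¬ d = 0)]
  | succ k ih =>
    intro d hd
    have hmul : (k + 1) * N = k * N + N := by ring
    rw [pow_succ, PowerSeries.coeff_mul]
    apply Finset.sum_eq_zero
    rintro ⟨p, q⟩ hpq
    rw [Finset.HasAntidiagonal.mem_antidiagonal] at hpq
    by_cases hp : p > k * N
    · rw [ih p hp, zero_mul]
    · have hq : q > N := by omega
      rw [hg q hq, mul_zero]

lemma my_compose_poly {f g : PowerSeries F} {Nf Ng : ℕ}
    (hf : ∀ d > Nf, coeff d f = 0) (hg : ∀ d > Ng, coeff d g = 0) :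
    ∀ d > Nf * Ng, coeff d (PowerSeries.compose f g) = 0 := by
  intro d hd
  rw [my_coeff_compose]
  apply Finset.sum_eq_zero
  intro k hk
  by_cases hkf : k > Nf
  · rw [hf k hkf, zero_mul]
  · have h1 : k * Ng ≤ Nf * Ng := Nat.mul_le_mul_right Ng (le_of_not_gt hkf)
    rw [my_pow_coeff_eq_zero hg k d (by omega), mul_zero]

lemma my_iterComp_poly {φ : PowerSeries F} {N : ℕ} (hφ : ∀ d > N, coeff d φ = 0) (k : ℕ) :
    ∃ M, ∀ d > M, coeff d (PowerSeries.iterComp φ k) = 0 := by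
  induction k with
  | zero =>
    exact ⟨1, fun d hd => by
      rw [show PowerSeries.iterComp φ 0 = (PowerSeries.X : PowerSeries F) from rfl,
        PowerSeries.coeff_X, if_neg (by omega : ¬ d = 1)]⟩
  | succ k ih =>
    obtain ⟨M, hM⟩ := ih
    exact ⟨M * N, fun d hd => by
      rw [show PowerSeries.iterComp φ (k+1) = PowerSeries.compose (PowerSeries.iterComp φ k) φ
        from rfl]
      exact my_compose_poly hM hφ d hd⟩

lemma my_coeff_pow_lt {φ : PowerSeries F} (h0 : constantCoeff φ = 0) :
    ∀ k p, p < k → coeff p (φ ^ k) = 0 := by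
  intro k
  induction k with
  | zero => intro p hp; exact absurd hp (Nat.not_lt_zero p)
  | succ k ih =>
    intro p hp
    rw [pow_succ, PowerSeries.coeff_mul]
    apply Finset.sum_eq_zero
    rintro ⟨i, j⟩ hij
    rw [Finset.HasAntidiagonal.mem_antidiagonal] at hij
    by_cases hi : i < k
    · rw [ih i hi, zero_mul]
    · have hj : j = 0 := by omega
      subst hj
      simp [PowerSeries.coeff_zero_eq_constantCoeff, h0]

lemma my_coeff_pow_self {φ : PowerSeries F} (h0 : constantCoeff φ = 0)
    (h1 : coeff 1 φ = 1) : ∀ k, coeff k (φ ^ k) = 1 := by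
  intro k
  induction k with
  | zero => simp
  | succ k ih =>
    rw [pow_succ, PowerSeries.coeff_mul]
    rw [Finset.sum_eq_single (k, 1)]
    · rw [ih, h1, one_mul]
    · rintro ⟨i, j⟩ hij hne
      rw [Finset.HasAntidiagonal.mem_antidiagonal] at hij
      by_cases hi : i < k
      · rw [my_coeff_pow_lt h0 k i hi, zero_mul]
      · have hj : j = 0 ∨ (i = k ∧ j = 1) := by omega
        rcases hj with hj | ⟨hi', hj'⟩
        · subst hj; simp [PowerSeries.coeff_zero_eq_constantCoeff, h0]
        · exact absurd (by simp [hi', hj']) hne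
    · intro h
      exact absurd (by simp : (k, 1) ∈ Finset.HasAntidiagonal.antidiagonal (k + 1)) h

lemma my_compose_inj {φ : PowerSeries F} (h0 : constantCoeff φ = 0)
    (h1 : coeff 1 φ = 1) {f : PowerSeries F} (hf : PowerSeries.compose f φ = 0) :
    f = 0 := by
  ext d
  induction d using Nat.strong_induction_on with
  | _ d ih =>
    have hd := congrArg (coeff d) hf
    rw [my_coeff_compose, map_zero] at hd
    rw [Finset.sum_eq_single d] at hd
    · rw [my_coeff_pow_self h0 h1 d, mul_one] at hd
      simpa using hd
    · intro k hk hne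
      have hkd : k < d := by rw [Finset.mem_range] at hk; omega
      have := ih k hkd
      simp only [map_zero] at this
      rw [this, zero_mul]
    · intro h
      exact absurd (Finset.mem_range.mpr (by omega)) h

lemma my_sum_poly {ι : Type*} (s : Finset ι) (f : ι → PowerSeries F)
    (h : ∀ i ∈ s, ∃ M, ∀ d > M, coeff d (f i) = 0) :
    ∃ M, ∀ d > M, coeff d (∑ i ∈ s, f i) = 0 := by
  classical
  induction s using Finset.induction with
  | empty => exact ⟨0, by simp⟩
  | insert x s hx ih =>
    obtain ⟨M1, hM1⟩ := h _ (Finset.mem_insert_self _ _)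
    obtain ⟨M2, hM2⟩ := ih (fun i hi => h i (Finset.mem_insert_of_mem hi))
    refine ⟨max M1 M2, fun d hd => ?_⟩
    rw [Finset.sum_insert hx, map_add, hM1 d (lt_of_le_of_lt (le_max_left _ _) hd),
      hM2 d (lt_of_le_of_lt (le_max_right _ _) hd), add_zero]

end Aux

/-- if `φ(x) = x + h.o.t.` is a polynomial and
`∑_{k=0}^m (-1)^k C(m,k) φ^{∘k}(x) = 0` for some `m ≥ 1`, then the compositional inverse
`φ⁻¹` (the power series `ψ` with `ψ(φ(x)) = x`) is also a polynomial. -/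
theorem inverse_polynomial_of_Phi_zero {F : Type*} [Field F] [CharZero F] (φ : PowerSeries F)
    (h0 : constantCoeff φ = 0) (h1 : coeff 1 φ = 1)
    (hpoly : ∃ N : ℕ, ∀ d > N, coeff d φ = 0)
    (m : ℕ) (hm : 1 ≤ m) (hPhi : PowerSeries.Phi φ m = 0)
    (ψ : PowerSeries F) (hψ0 : constantCoeff ψ = 0)
    (hψ : PowerSeries.compose ψ φ = PowerSeries.X) :
    ∃ N : ℕ, ∀ d > N, coeff d ψ = 0 := by
  obtain ⟨N, hN⟩ := hpoly
  set ψ' : PowerSeries F :=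
    ∑ i ∈ Finset.range m, ((-1 : F) ^ i * (m.choose (i+1) : F)) • PowerSeries.iterComp φ i
    with hψ'def
  -- key identity from Φ_m = 0
  have key : (∑ i ∈ Finset.range m,
      ((-1 : F) ^ (i+1) * (m.choose (i+1) : F)) • PowerSeries.iterComp φ (i+1))
      = - PowerSeries.X := by
    have h2 := hPhi
    unfold PowerSeries.Phi at h2
    rw [Finset.sum_range_succ'] at h2
    simp only [pow_zero, Nat.choose_zero_right, Nat.cast_one, one_mul, one_smul] at h2
    have : PowerSeries.iterComp φ 0 = (PowerSeries.X : PowerSeries F) := rfl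
    rw [this] at h2
    linear_combination h2
  have hcomp : PowerSeries.compose ψ' φ = PowerSeries.X := by
    rw [hψ'def, my_compose_sum_smul]
    have hstep : ∀ i, PowerSeries.compose (PowerSeries.iterComp φ i) φ
        = PowerSeries.iterComp φ (i+1) := fun i => rfl
    calc ∑ i ∈ Finset.range m,
          ((-1 : F) ^ i * (m.choose (i+1) : F)) • PowerSeries.compose (PowerSeries.iterComp φ i) φ
        = - ∑ i ∈ Finset.range m,
            ((-1 : F) ^ (i+1) * (m.choose (i+1) : F)) • PowerSeries.iterComp φ (i+1) := by
          rw [← Finset.sum_neg_distrib]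
          apply Finset.sum_congr rfl
          intro i _
          rw [hstep i, ← neg_smul]
          congr 1
          ring
      _ = PowerSeries.X := by rw [key, neg_neg]
  have hψψ' : ψ = ψ' := by
    have hz : PowerSeries.compose (ψ - ψ') φ = 0 := by
      rw [my_compose_sub, hψ, hcomp, sub_self]
    have := my_compose_inj h0 h1 hz
    exact sub_eq_zero.mp this
  rw [hψψ', hψ'def]
  apply my_sum_poly
  intro i _
  obtain ⟨M, hM⟩ := my_iterComp_poly hN i
  exact ⟨M, fun d hd => by rw [map_smul, hM d hd, smul_zero]⟩
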